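/- Jacobi triple product identity: for complex q and x with 0 < |q| < 1 and x ≠ 0, the theta series θ_q(x) = ∑_{k∈ℤ} q^{k²} x^k equals the product (q²;q²)_∞ · (-qx;q²)_∞ · (-q/x;q²)_∞. -/

import Mathlib

open Finset Filter Topology

/-- The infinite q-Pochhammer symbol `(a;q)_∞ = ∏_{n ≥ 0} (1 - a qⁿ)`. -/
noncomputable def qPochInf (a q : ℂ) : ℂ := ∏' n : ℕ, (1 - a * q ^ n)

namespace JTP

/-- Partial q-Pochhammer `(p;p)_m`. -/
noncomputable def P (p : ℂ) (m : ℕ) : ℂ := ∏ j ∈ range m, (1 - p ^ (j+1))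

/-- Gaussian binomial coefficient (in base `p`), extended by zero. -/
noncomputable def gb (p : ℂ) (n : ℕ) (k : ℤ) : ℂ :=
  if 0 ≤ k ∧ k ≤ n then P p n / (P p k.toNat * P p (n - k.toNat)) else 0

variable {p q x c : ℂ}

lemma one_sub_pow_ne (hp : ‖p‖ < 1) (m : ℕ) (hm : m ≠ 0) : 1 - p ^ m ≠ 0 := by
  intro h
  have h1 : p ^ m = 1 := by linear_combination -h
  have : ‖p ^ m‖ < 1 := by
    rw [norm_pow]
    exact pow_lt_one₀ (norm_nonneg p) hp hm
  rw [h1] at this; simp at this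

lemma P_succ (p : ℂ) (m : ℕ) : P p (m+1) = P p m * (1 - p ^ (m+1)) := Finset.prod_range_succ _ _

lemma P_zero : P p 0 = 1 := rfl

lemma P_ne (hp : ‖p‖ < 1) (m : ℕ) : P p m ≠ 0 :=
  Finset.prod_ne_zero_iff.2 fun j _ => one_sub_pow_ne hp (j+1) (Nat.succ_ne_zero j)

lemma gb_val {n : ℕ} {k : ℤ} (h0 : 0 ≤ k) (h1 : k ≤ n) :
    gb p n k = P p n / (P p k.toNat * P p (n - k.toNat)) := if_pos ⟨h0, h1⟩

lemma gb_zero_of_neg {n : ℕ} {k : ℤ} (h : k < 0) : gb p n k = 0 :=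
  if_neg (by omega)

lemma gb_zero_of_gt {n : ℕ} {k : ℤ} (h : (n:ℤ) < k) : gb p n k = 0 :=
  if_neg (by omega)

lemma gb_zero' (hp : ‖p‖ < 1) (n : ℕ) : gb p n 0 = 1 := by
  rw [gb_val le_rfl (by exact_mod_cast Nat.zero_le n)]
  simp [P_zero, P_ne hp n]

lemma gb_self (hp : ‖p‖ < 1) (n : ℕ) : gb p n n = 1 := by
  rw [gb_val (by positivity) le_rfl]
  simp [P_zero, P_ne hp n]

lemma zp (p : ℂ) (m : ℕ) (i : ℤ) (h : i = m) : p ^ i = p ^ m := by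
  rw [h, zpow_natCast]

/-- Universal Pascal-type ratio recurrence. -/
lemma gb_ratio (hp : ‖p‖ < 1) (n : ℕ) (k : ℤ) :
    gb p n (k+1) * (1 - p ^ (k+1)) = gb p n k * (1 - p ^ ((n:ℤ) - k)) := by
  rcases lt_trichotomy k (-1) with hk | hk | hk
  · rw [gb_zero_of_neg (by omega : k + 1 < 0), gb_zero_of_neg (by omega)]; ring
  · subst hk
    rw [gb_zero_of_neg (by omega : (-1:ℤ) < 0), show (-1:ℤ)+1 = 0 from rfl, zpow_zero]
    ring
  · rcases le_or_gt (n:ℤ) k with hkn | hkn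
    · rcases eq_or_lt_of_le hkn with hkn' | hkn'
      · subst hkn'
        rw [gb_zero_of_gt (by omega), show (n:ℤ)-(n:ℤ) = 0 by ring, zpow_zero]
        ring
      · rw [gb_zero_of_gt (by omega), gb_zero_of_gt (by omega)]; ring
    · obtain ⟨j, rfl⟩ : ∃ j : ℕ, (j:ℤ) = k := ⟨k.toNat, by omega⟩
      have hjn : j + 1 ≤ n := by omega
      rw [gb_val (by positivity) (by exact_mod_cast hjn),
        gb_val (by positivity) (by omega)]
      have e1 : ((j:ℤ)+1).toNat = j+1 := by omega
      have e2 : ((j:ℤ)).toNat = j := by omega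
      rw [e1, e2, zp p (j+1) ((j:ℤ)+1) (by push_cast; ring),
        zp p (n-j) ((n:ℤ)-(j:ℤ)) (by omega)]
      have e4 : n - j = (n - (j+1)) + 1 := by omega
      rw [e4, P_succ p (n-(j+1)), P_succ p j]
      have h5 : n - (j+1) + 1 = n - j := by omega
      rw [h5]
      have n1 := P_ne hp n; have n2 := P_ne hp j; have n3 := P_ne hp (n - (j+1))
      have n4 := one_sub_pow_ne hp (j+1) (by omega)
      have n5 := one_sub_pow_ne hp (n-j) (by omega)
      field_simp

/-- Two-step Pascal-type recurrence. -/
lemma gb_two (hp : ‖p‖ < 1) (n : ℕ) (k : ℤ) :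
    gb p (n+2) (k+1) * ((1 - p ^ (k+1)) * (1 - p ^ ((n:ℤ) + 1 - k))) =
      gb p n k * ((1 - p ^ ((n:ℤ)+1)) * (1 - p ^ ((n:ℤ)+2))) := by
  rcases lt_trichotomy k (-1) with hk | hk | hk
  · rw [gb_zero_of_neg (show k+1 < 0 by omega), gb_zero_of_neg (by omega)]; ring
  · subst hk
    rw [gb_zero_of_neg (by omega : (-1:ℤ) < 0), show (-1:ℤ)+1 = 0 from rfl, zpow_zero]
    ring
  · rcases le_or_gt k (n:ℤ) with hkn | hkn
    · obtain ⟨j, rfl⟩ : ∃ j : ℕ, (j:ℤ) = k := ⟨k.toNat, by omega⟩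
      have hjn : j ≤ n := by exact_mod_cast hkn
      rw [gb_val (by positivity) (by push_cast; omega),
        gb_val (by positivity) (by exact_mod_cast hjn)]
      have e1 : ((j:ℤ)+1).toNat = j+1 := by omega
      have e2 : ((j:ℤ)).toNat = j := by omega
      rw [e1, e2, zp p (j+1) ((j:ℤ)+1) (by push_cast; ring),
        zp p (n+1-j) ((n:ℤ)+1-(j:ℤ)) (by omega),
        zp p (n+1) ((n:ℤ)+1) (by push_cast; ring),
        zp p (n+2) ((n:ℤ)+2) (by push_cast; ring)]
      have e6 : n + 2 - (j+1) = (n - j) + 1 := by omega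
      have e7 : n - j + 1 = n + 1 - j := by omega
      rw [e6, P_succ p (n-j), e7, P_succ p j,
        show n+2 = (n+1)+1 from rfl, P_succ p (n+1), P_succ p n]
      have n1 := P_ne hp n; have n2 := P_ne hp j; have n3 := P_ne hp (n - j)
      have n4 := one_sub_pow_ne hp (j+1) (by omega)
      have n5 := one_sub_pow_ne hp (n+1-j) (by omega)
      field_simp
    · rcases eq_or_lt_of_le (show (n:ℤ)+1 ≤ k by omega) with hkn' | hkn'
      · subst hkn'
        have hz : gb p n ((n:ℤ)+1) = 0 := gb_zero_of_gt (by omega)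
        rw [hz, show (n:ℤ)+1-((n:ℤ)+1) = 0 by ring, zpow_zero]
        ring
      · rw [gb_zero_of_gt (by omega), gb_zero_of_gt (by push_cast; omega)]; ring

/-- The three-term recurrence driving the induction. -/
lemma star (hp : ‖p‖ < 1) (n : ℕ) (k : ℤ) :
    gb p (2*n+2) ((n:ℤ)+1+k) =
      gb p (2*n) ((n:ℤ)+k) * (1 + p ^ (2*(n:ℤ)+1))
      + p ^ ((n:ℤ)+1-k) * gb p (2*n) ((n:ℤ)+k-1)
      + p ^ ((n:ℤ)+1+k) * gb p (2*n) ((n:ℤ)+k+1) := by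
  rcases lt_trichotomy k (-(n:ℤ)-1) with hk | hk | hk
  · rw [gb_zero_of_neg (show (n:ℤ)+1+k < 0 by omega), gb_zero_of_neg (by omega),
      gb_zero_of_neg (by omega), gb_zero_of_neg (by omega)]
    ring
  · subst hk
    rw [show (n:ℤ)+1+(-(n:ℤ)-1) = 0 by ring, gb_zero' hp,
      gb_zero_of_neg (by omega : (n:ℤ)+(-(n:ℤ)-1) < 0),
      gb_zero_of_neg (by omega : (n:ℤ)+(-(n:ℤ)-1)-1 < 0),
      show (n:ℤ)+(-(n:ℤ)-1)+1 = 0 by ring, gb_zero' hp]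
    ring_nf
    simp
  · rcases lt_or_ge (n:ℤ) k with hk2 | hk2
    · rcases lt_trichotomy ((n:ℤ)+1) k with hk3 | hk3 | hk3
      · rw [gb_zero_of_gt (show ((2*n+2 : ℕ):ℤ) < (n:ℤ)+1+k by push_cast; omega),
          gb_zero_of_gt (show ((2*n : ℕ):ℤ) < (n:ℤ)+k by push_cast; omega),
          gb_zero_of_gt (show ((2*n : ℕ):ℤ) < (n:ℤ)+k-1 by push_cast; omega),
          gb_zero_of_gt (show ((2*n : ℕ):ℤ) < (n:ℤ)+k+1 by push_cast; omega)]
        ring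
      · subst hk3
        have hz1 : gb p (2*n) ((n:ℤ)+((n:ℤ)+1)) = 0 := gb_zero_of_gt (by push_cast; omega)
        have hz2 : gb p (2*n) ((n:ℤ)+((n:ℤ)+1)+1) = 0 := gb_zero_of_gt (by push_cast; omega)
        have hm : gb p (2*n+2) ((n:ℤ)+1+((n:ℤ)+1)) = 1 := by
          rw [show (n:ℤ)+1+((n:ℤ)+1) = ((2*n+2 : ℕ) : ℤ) by push_cast; ring]
          exact gb_self hp _
        have hm2 : gb p (2*n) ((n:ℤ)+((n:ℤ)+1)-1) = 1 := by
          rw [show (n:ℤ)+((n:ℤ)+1)-1 = ((2*n : ℕ) : ℤ) by push_cast; ring]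
          exact gb_self hp _
        rw [hz1, hz2, hm, hm2, show (n:ℤ)+1-((n:ℤ)+1) = 0 by ring, zpow_zero]
        ring
      · omega
    · obtain ⟨a, ha⟩ : ∃ a : ℕ, (a:ℤ) = (n:ℤ) + k := ⟨((n:ℤ)+k).toNat, by omega⟩
      obtain ⟨b, hb⟩ : ∃ b : ℕ, (b:ℤ) = (n:ℤ) - k := ⟨((n:ℤ)-k).toNat, by omega⟩
      have h1 := gb_ratio hp (2*n) ((n:ℤ)+k-1)
      have h2 := gb_ratio hp (2*n) ((n:ℤ)+k)
      have h3 := gb_two hp (2*n) ((n:ℤ)+k)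
      rw [show (n:ℤ)+k-1+1 = (n:ℤ)+k by ring] at h1
      rw [zp p a ((n:ℤ)+k) ha.symm,
        zp p (b+1) (((2*n:ℕ):ℤ) - ((n:ℤ)+k-1)) (by push_cast; omega)] at h1
      rw [zp p (a+1) ((n:ℤ)+k+1) (by omega),
        zp p b (((2*n:ℕ):ℤ) - ((n:ℤ)+k)) (by push_cast; omega)] at h2
      rw [show (2*n : ℕ) + 2 = 2*n+2 from rfl,
        zp p (a+1) ((n:ℤ)+k+1) (by omega),
        zp p (b+1) (((2*n:ℕ):ℤ)+1 - ((n:ℤ)+k)) (by push_cast; omega),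
        zp p (a+b+1) (((2*n:ℕ):ℤ)+1) (by push_cast; omega),
        zp p (a+b+2) (((2*n:ℕ):ℤ)+2) (by push_cast; omega),
        show (n:ℤ)+k+1 = (n:ℤ)+1+k by ring] at h3
      rw [zp p (a+b+1) (2*(n:ℤ)+1) (by push_cast; omega),
        zp p (b+1) ((n:ℤ)+1-k) (by push_cast; omega),
        zp p (a+1) ((n:ℤ)+1+k) (by push_cast; omega)]
      have hD : ((1 - p^(a+1)) * (1 - p^(b+1))) ≠ 0 :=
        mul_ne_zero (one_sub_pow_ne hp _ (by omega)) (one_sub_pow_ne hp _ (by omega))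
      refine mul_right_cancel₀ hD ?_
      linear_combination h3 + (p^(b+1)*(1-p^(a+1)))*h1 - (p^(a+1)*(1-p^(b+1)))*h2

lemma hq2pow (i : ℤ) : ((q:ℂ)^2)^i = q^(2*i) := by
  rw [← zpow_natCast q 2, ← zpow_mul]; norm_num

/-- The finite Jacobi triple product identity. -/
lemma finite_jtp (hq0 : q ≠ 0) (hq1 : ‖q‖ < 1) (hx : x ≠ 0) (n : ℕ) :
    ∑ k ∈ Icc (-(n:ℤ)) (n:ℤ), gb (q^2) (2*n) ((n:ℤ)+k) * (q^(k^2) * x^k)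
      = ∏ j ∈ range n, ((1 + q^(2*j+1) * x) * (1 + q^(2*j+1) / x)) := by
  have hp : ‖(q:ℂ)^2‖ < 1 := by
    rw [norm_pow]; exact pow_lt_one₀ (norm_nonneg q) hq1 two_ne_zero
  induction n with
  | zero => norm_num [gb_zero' hp]
  | succ n ih =>
    set U : ℤ → ℂ := fun j => gb (q^2) (2*n) ((n:ℤ)+j) * (q^(j^2) * x^j) with hU
    have hUzlt : ∀ j : ℤ, j < -(n:ℤ) → U j = 0 := fun j hj => by
      rw [hU]; simp only; rw [gb_zero_of_neg (by omega)]; ring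
    have hUzgt : ∀ j : ℤ, (n:ℤ) < j → U j = 0 := fun j hj => by
      rw [hU]; simp only; rw [gb_zero_of_gt (by push_cast; omega)]; ring
    have key : ∀ k : ℤ, gb (q^2) (2*n+2) ((n:ℤ)+1+k) * (q^(k^2) * x^k)
        = U k + q^(4*n+2) * U k + (q^(2*n+1) * x) * U (k-1) + (q^(2*n+1) * x⁻¹) * U (k+1) := by
      intro k
      have e1 : ((q:ℂ)^2) ^ (2*(n:ℤ)+1) = q^(4*n+2 : ℕ) := by
        rw [hq2pow, ← zpow_natCast q (4*n+2)]
        congr 1; push_cast; ring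
      have e2 : ((q:ℂ)^2) ^ ((n:ℤ)+1-k) * (q^(k^2) * x^k)
          = (q^(2*n+1 : ℕ) * x) * (q^((k-1)^2) * x^(k-1)) := by
        calc ((q:ℂ)^2) ^ ((n:ℤ)+1-k) * (q^(k^2) * x^k)
            = q^(2*((n:ℤ)+1-k) + k^2) * x^k := by
              rw [hq2pow, zpow_add₀ hq0]; ring
          _ = q^(((2*n+1 : ℕ):ℤ) + (k-1)^2) * x^(1+(k-1)) := by
              rw [show (2*((n:ℤ)+1-k) + k^2) = ((2*n+1 : ℕ):ℤ) + (k-1)^2 by push_cast; ring,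
                show (1+(k-1) : ℤ) = k by ring]
          _ = (q^(2*n+1 : ℕ) * x) * (q^((k-1)^2) * x^(k-1)) := by
              rw [zpow_add₀ hq0, zpow_add₀ hx, zpow_natCast, zpow_one]; ring
      have e3 : ((q:ℂ)^2) ^ ((n:ℤ)+1+k) * (q^(k^2) * x^k)
          = (q^(2*n+1 : ℕ) * x⁻¹) * (q^((k+1)^2) * x^(k+1)) := by
        calc ((q:ℂ)^2) ^ ((n:ℤ)+1+k) * (q^(k^2) * x^k)
            = q^(2*((n:ℤ)+1+k) + k^2) * x^k := by
              rw [hq2pow, zpow_add₀ hq0]; ring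
          _ = q^(((2*n+1 : ℕ):ℤ) + (k+1)^2) * x^(-1+(k+1)) := by
              rw [show (2*((n:ℤ)+1+k) + k^2) = ((2*n+1 : ℕ):ℤ) + (k+1)^2 by push_cast; ring,
                show (-1+(k+1) : ℤ) = k by ring]
          _ = (q^(2*n+1 : ℕ) * x⁻¹) * (q^((k+1)^2) * x^(k+1)) := by
              rw [zpow_add₀ hq0, zpow_add₀ hx, zpow_natCast, zpow_neg_one]; ring
      rw [star hp n k, hU]
      simp only
      rw [add_mul, add_mul, mul_add (gb (q^2) (2*n) ((n:ℤ)+k)), mul_one]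
      rw [show ((q:ℂ)^2) ^ ((n:ℤ)+1-k) * gb (q^2) (2*n) ((n:ℤ)+k-1) * (q^(k^2) * x^k)
            = gb (q^2) (2*n) ((n:ℤ)+(k-1)) * (((q:ℂ)^2) ^ ((n:ℤ)+1-k) * (q^(k^2) * x^k)) by
          rw [show (n:ℤ)+(k-1) = (n:ℤ)+k-1 by ring]; ring,
        show ((q:ℂ)^2) ^ ((n:ℤ)+1+k) * gb (q^2) (2*n) ((n:ℤ)+k+1) * (q^(k^2) * x^k)
            = gb (q^2) (2*n) ((n:ℤ)+(k+1)) * (((q:ℂ)^2) ^ ((n:ℤ)+1+k) * (q^(k^2) * x^k)) by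
          rw [show (n:ℤ)+(k+1) = (n:ℤ)+k+1 by ring]; ring,
        e2, e3, e1]
      ring
    have goalL : ∑ k ∈ Icc (-((n:ℕ)+1:ℤ)) (((n:ℕ):ℤ)+1),
          gb (q^2) (2*n+2) ((n:ℤ)+1+k) * (q^(k^2) * x^k)
        = (∑ k ∈ Icc (-(n:ℤ)) (n:ℤ), U k) *
            ((1 + q^(2*n+1) * x) * (1 + q^(2*n+1) / x)) := by
      rw [Finset.sum_congr rfl fun k _ => key k]
      rw [Finset.sum_add_distrib, Finset.sum_add_distrib, Finset.sum_add_distrib]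
      have s1 : ∑ k ∈ Icc (-((n:ℕ)+1:ℤ)) (((n:ℕ):ℤ)+1), U k
          = ∑ k ∈ Icc (-(n:ℤ)) (n:ℤ), U k := by
        refine (Finset.sum_subset (fun t ht => ?_) (fun t ht hts => ?_)).symm
        · simp only [Finset.mem_Icc] at *; omega
        · simp only [Finset.mem_Icc] at ht hts
          rcases lt_or_ge t (-(n:ℤ)) with h | h
          · exact hUzlt t h
          · exact hUzgt t (by omega)
      have s2 : ∑ k ∈ Icc (-((n:ℕ)+1:ℤ)) (((n:ℕ):ℤ)+1), q^(4*n+2) * U k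
          = q^(4*n+2) * ∑ k ∈ Icc (-(n:ℤ)) (n:ℤ), U k := by
        rw [← Finset.mul_sum, s1]
      have s3 : ∑ k ∈ Icc (-((n:ℕ)+1:ℤ)) (((n:ℕ):ℤ)+1), (q^(2*n+1) * x) * U (k-1)
          = (q^(2*n+1) * x) * ∑ k ∈ Icc (-(n:ℤ)) (n:ℤ), U k := by
        rw [← Finset.mul_sum]
        congr 1
        have hmap : Icc (-((n:ℕ)+1:ℤ)) (((n:ℕ):ℤ)+1)
            = Finset.map (addRightEmbedding (1:ℤ)) (Icc (-(n:ℤ)-2) (n:ℤ)) := by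
          rw [Finset.map_add_right_Icc]; congr 1; ring
        rw [hmap, Finset.sum_map]
        simp only [addRightEmbedding_apply, add_sub_cancel_right]
        refine (Finset.sum_subset (fun t ht => ?_) (fun t ht hts => ?_)).symm
        · simp only [Finset.mem_Icc] at *; omega
        · simp only [Finset.mem_Icc] at ht hts
          exact hUzlt t (by omega)
      have s4 : ∑ k ∈ Icc (-((n:ℕ)+1:ℤ)) (((n:ℕ):ℤ)+1), (q^(2*n+1) * x⁻¹) * U (k+1)
          = (q^(2*n+1) * x⁻¹) * ∑ k ∈ Icc (-(n:ℤ)) (n:ℤ), U k := by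
        rw [← Finset.mul_sum]
        congr 1
        have hmap : Icc (-((n:ℕ)+1:ℤ)) (((n:ℕ):ℤ)+1)
            = Finset.map (addRightEmbedding (-1:ℤ)) (Icc (-(n:ℤ)) ((n:ℤ)+2)) := by
          rw [Finset.map_add_right_Icc]; congr 1 <;> ring
        rw [hmap, Finset.sum_map]
        simp only [addRightEmbedding_apply]
        rw [Finset.sum_congr rfl (fun t _ => by rw [show t + -1 + 1 = t by ring])]
        refine (Finset.sum_subset (fun t ht => ?_) (fun t ht hts => ?_)).symm
        · simp only [Finset.mem_Icc] at *; omega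
        · simp only [Finset.mem_Icc] at ht hts
          exact hUzgt t (by omega)
      rw [s1, s2, s3, s4]
      field_simp
      ring
    have hc1 : (-(((n:ℕ)+1 : ℕ) : ℤ)) = -((n:ℕ)+1:ℤ) := by push_cast; ring
    have hc2 : ((((n:ℕ)+1 : ℕ)) : ℤ) = ((n:ℕ):ℤ)+1 := by push_cast; ring
    have hc3 : 2*(n+1) = 2*n+2 := by ring
    rw [hc3]
    calc ∑ k ∈ Icc (-(((n:ℕ)+1 : ℕ):ℤ)) ((((n:ℕ)+1 : ℕ)):ℤ),
            gb (q^2) (2*n+2) (((((n:ℕ)+1 : ℕ)):ℤ)+k) * (q^(k^2) * x^k)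
        = ∑ k ∈ Icc (-((n:ℕ)+1:ℤ)) (((n:ℕ):ℤ)+1),
            gb (q^2) (2*n+2) ((n:ℤ)+1+k) * (q^(k^2) * x^k) := by
          rw [hc1, hc2]
      _ = (∑ k ∈ Icc (-(n:ℤ)) (n:ℤ), U k) * ((1 + q^(2*n+1) * x) * (1 + q^(2*n+1) / x)) := goalL
      _ = (∏ j ∈ range n, ((1 + q^(2*j+1) * x) * (1 + q^(2*j+1) / x)))
            * ((1 + q^(2*n+1) * x) * (1 + q^(2*n+1) / x)) := by rw [ih]
      _ = ∏ j ∈ range (n+1), ((1 + q^(2*j+1) * x) * (1 + q^(2*j+1) / x)) := by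
          rw [Finset.prod_range_succ]

/-! ### Analytic estimates -/

lemma sum_aux {r X : ℝ} (hr0 : 0 ≤ r) (hr : r < 1) (hX : 0 < X) :
    Summable (fun m : ℕ => r ^ (m^2) * X ^ m) := by
  apply summable_of_ratio_norm_eventually_le (r := 1/2) (by norm_num)
  have h0 : Tendsto (fun m : ℕ => r ^ (2*m+1) * X) atTop (𝓝 (0 * X)) := by
    apply Tendsto.mul_const
    have : Tendsto (fun m : ℕ => r ^ m) atTop (𝓝 0) :=
      tendsto_pow_atTop_nhds_zero_of_lt_one hr0 hr
    exact this.comp (tendsto_atTop_atTop.2 fun b => ⟨b, fun a ha => by omega⟩)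
  rw [zero_mul] at h0
  filter_upwards [h0.eventually_le_const (by norm_num : (0:ℝ) < 1/2)] with m hm
  have e : r ^ ((m+1)^2) * X^(m+1) = (r ^ (2*m+1) * X) * (r ^ (m^2) * X^m) := by
    rw [show (m+1)^2 = m^2 + (2*m+1) by ring, pow_add, pow_succ]; ring
  rw [Real.norm_eq_abs, Real.norm_eq_abs, abs_of_nonneg (by positivity),
    abs_of_nonneg (by positivity), e]
  have hb : (0:ℝ) ≤ r ^ (m^2) * X^m := by positivity
  exact mul_le_mul_of_nonneg_right hm hb

lemma sum_theta (hq1 : ‖q‖ < 1) (hx : x ≠ 0) :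
    Summable (fun k : ℤ => ‖q ^ (k^2) * x ^ k‖) := by
  apply Summable.of_nat_of_neg_add_one
  · apply Summable.congr (sum_aux (norm_nonneg q) hq1 (norm_pos_iff.2 hx))
    intro m
    rw [norm_mul, norm_zpow, norm_zpow]
    rw [show ((m:ℤ)^2) = ((m^2 : ℕ) : ℤ) by push_cast; ring, zpow_natCast, zpow_natCast]
  · have hXi : (0:ℝ) < ‖x‖⁻¹ := by
      have := norm_pos_iff.2 hx; positivity
    have base := (summable_nat_add_iff 1).2 (sum_aux (norm_nonneg q) hq1 hXi)
    apply Summable.congr base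
    intro m
    rw [norm_mul, norm_zpow, norm_zpow]
    rw [show ((-((m:ℤ)+1))^2) = (((m+1)^2 : ℕ) : ℤ) by push_cast; ring, zpow_natCast]
    rw [show (-((m:ℤ)+1)) = -(((m+1) : ℕ) : ℤ) by push_cast; ring, zpow_neg, ← inv_zpow,
      zpow_natCast]

lemma geo_partial {r : ℝ} (hr0 : 0 ≤ r) (hr : r < 1) (m : ℕ) :
    ∑ j ∈ range m, r ^ (j+1) ≤ r / (1-r) := by
  have h1 : ∑ j ∈ range m, r ^ (j+1) = r * ∑ j ∈ range m, r ^ j := by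
    rw [Finset.mul_sum]; exact Finset.sum_congr rfl fun j _ => by rw [pow_succ]; ring
  rw [h1, div_eq_mul_inv]
  apply mul_le_mul_of_nonneg_left _ hr0
  exact (Summable.sum_le_tsum (range m) (fun i _ => by positivity)
    (summable_geometric_of_lt_one hr0 hr)).trans
    (le_of_eq (tsum_geometric_of_lt_one hr0 hr))

lemma P_norm_le (hp : ‖p‖ < 1) (m : ℕ) : ‖P p m‖ ≤ Real.exp (‖p‖/(1-‖p‖)) := by
  set r := ‖p‖ with hr
  have hr0 : 0 ≤ r := norm_nonneg p
  rw [P, norm_prod]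
  calc ∏ j ∈ range m, ‖1 - p^(j+1)‖ ≤ ∏ j ∈ range m, Real.exp (r^(j+1)) := by
        apply Finset.prod_le_prod (fun j _ => norm_nonneg _)
        intro j _
        calc ‖1 - p^(j+1)‖ ≤ ‖(1:ℂ)‖ + ‖p^(j+1)‖ := norm_sub_le _ _
          _ = 1 + r^(j+1) := by rw [norm_one, norm_pow]
          _ ≤ Real.exp (r^(j+1)) := by
              have := Real.add_one_le_exp (r^(j+1)); linarith
    _ = Real.exp (∑ j ∈ range m, r^(j+1)) := by rw [Real.exp_sum]
    _ ≤ Real.exp (r/(1-r)) := Real.exp_le_exp.2 (geo_partial hr0 hp m)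

lemma exp_le_one_sub {t s : ℝ} (ht : 0 ≤ t) (hts : t ≤ s) (hs : s < 1) :
    Real.exp (-(t/(1-s))) ≤ 1 - t := by
  have hs1 : 0 < 1 - s := by linarith
  have ht1 : 0 < 1 - t := by linarith
  have h1 : 1/(1-t) ≤ 1 + t/(1-s) := by
    rw [div_le_iff₀ ht1] at *
    have : (1 + t/(1-s)) * (1-t) - 1 = t*(s-t)/(1-s) := by field_simp; ring
    nlinarith [div_nonneg (mul_nonneg ht (by linarith : (0:ℝ) ≤ s - t)) hs1.le]
  have h2 : 1 + t/(1-s) ≤ Real.exp (t/(1-s)) := by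
    have := Real.add_one_le_exp (t/(1-s)); linarith
  have h3 : 1/(1-t) ≤ Real.exp (t/(1-s)) := h1.trans h2
  rw [Real.exp_neg]
  rw [inv_le_comm₀ (Real.exp_pos _) ht1] at *
  calc (1-t)⁻¹ = 1/(1-t) := by rw [one_div]
    _ ≤ Real.exp (t/(1-s)) := h3

lemma P_norm_ge (hp : ‖p‖ < 1) (m : ℕ) :
    Real.exp (-(‖p‖/((1-‖p‖)*(1-‖p‖)))) ≤ ‖P p m‖ := by
  set r := ‖p‖ with hr
  have hr0 : 0 ≤ r := norm_nonneg p
  rw [P, norm_prod]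
  calc Real.exp (-(r/((1-r)*(1-r))))
      ≤ Real.exp (-(∑ j ∈ range m, r^(j+1))/(1-r)) := by
        apply Real.exp_le_exp.2
        have h1r : (0:ℝ) < 1 - r := by linarith
        rw [neg_div, neg_le_neg_iff, div_le_div_iff₀ (by positivity) (by positivity)]
        calc (∑ j ∈ range m, r^(j+1)) * ((1-r)*(1-r)) ≤ (r/(1-r)) * ((1-r)*(1-r)) := by
              apply mul_le_mul_of_nonneg_right (geo_partial hr0 hp m) (by positivity)
          _ = r * (1-r) := by field_simp
    _ = ∏ j ∈ range m, Real.exp (-(r^(j+1)/(1-r))) := by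
        rw [← Real.exp_sum]
        congr 1
        rw [neg_div, Finset.sum_div, ← Finset.sum_neg_distrib]
    _ ≤ ∏ j ∈ range m, ‖1 - p^(j+1)‖ := by
        apply Finset.prod_le_prod (fun j _ => (Real.exp_pos _).le)
        intro j _
        calc Real.exp (-(r^(j+1)/(1-r))) ≤ 1 - r^(j+1) := by
              apply exp_le_one_sub (by positivity) _ hp
              calc r^(j+1) ≤ r^1 := pow_le_pow_of_le_one hr0 hp.le (by omega)
                _ = r := pow_one r
          _ = 1 - ‖p^(j+1)‖ := by rw [norm_pow]
          _ ≤ ‖1 - p^(j+1)‖ := by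
              have := norm_sub_norm_le (1:ℂ) (p^(j+1))
              rw [norm_one] at this; linarith

noncomputable def Mgb (p : ℂ) : ℝ :=
  Real.exp (‖p‖/(1-‖p‖)) /
    (Real.exp (-(‖p‖/((1-‖p‖)*(1-‖p‖)))) * Real.exp (-(‖p‖/((1-‖p‖)*(1-‖p‖)))))

lemma gb_norm_le (hp : ‖p‖ < 1) (n : ℕ) (k : ℤ) : ‖gb p n k‖ ≤ Mgb p := by
  have hM : 0 < Mgb p := by rw [Mgb]; positivity
  by_cases h : 0 ≤ k ∧ k ≤ n
  · rw [gb, if_pos h, Mgb, norm_div, norm_mul]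
    apply div_le_div₀ (by positivity) (P_norm_le hp n) (by positivity)
    exact mul_le_mul (P_norm_ge hp _) (P_norm_ge hp _) (Real.exp_pos _).le (norm_nonneg _)
  · rw [gb, if_neg h, norm_zero]; exact hM.le

/-! ### Limits -/

lemma mult_one_sub (c p : ℂ) (hp : ‖p‖ < 1) : Multipliable (fun n : ℕ => 1 - c * p^n) := by
  by_cases h0 : ∃ n0 : ℕ, 1 - c * p^n0 = 0
  · obtain ⟨n0, hn0⟩ := h0
    refine ⟨0, ?_⟩
    have hev : ∀ᶠ s : Finset ℕ in atTop, ∏ i ∈ s, (1 - c * p^i) = 0 :=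
      eventually_atTop.2 ⟨{n0}, fun s hs =>
        Finset.prod_eq_zero (hs (Finset.mem_singleton_self n0)) hn0⟩
    exact Tendsto.congr' (hev.mono fun s hs => hs.symm) tendsto_const_nhds
  · push_neg at h0
    have hlog : Summable fun n : ℕ => Complex.log (1 - c * p^n) := by
      have hgeo : Summable fun n : ℕ => (3/2) * (‖c‖ * ‖p‖^n) :=
        ((summable_geometric_of_lt_one (norm_nonneg p) hp).mul_left ‖c‖).mul_left _
      apply Summable.of_norm_bounded_eventually hgeo
      rw [Nat.cofinite_eq_atTop]
      have hto : Tendsto (fun n : ℕ => ‖c‖ * ‖p‖^n) atTop (𝓝 (‖c‖ * 0)) :=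
        (tendsto_pow_atTop_nhds_zero_of_lt_one (norm_nonneg p) hp).const_mul _
      rw [mul_zero] at hto
      filter_upwards [hto.eventually_le_const (by norm_num : (0:ℝ) < 1/2)] with n hn
      have hz : ‖-(c * p^n)‖ ≤ 1/2 := by
        rw [norm_neg, norm_mul, norm_pow]; exact hn
      have hlb := Complex.norm_log_one_add_half_le_self hz
      rw [show 1 + -(c * p^n) = 1 - c * p^n by ring] at hlb
      calc ‖Complex.log (1 - c*p^n)‖ ≤ 3/2 * ‖-(c * p^n)‖ := hlb
        _ = 3/2 * (‖c‖ * ‖p‖^n) := by rw [norm_neg, norm_mul, norm_pow]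
    exact Complex.multipliable_of_summable_log hlog

lemma tendsto_partial (c p : ℂ) (hp : ‖p‖ < 1) :
    Tendsto (fun m : ℕ => ∏ j ∈ range m, (1 - c * p^j)) atTop
      (𝓝 (∏' n : ℕ, (1 - c * p^n))) :=
  (mult_one_sub c p hp).hasProd.tendsto_prod_nat

noncomputable def Pinf (p : ℂ) : ℂ := ∏' n : ℕ, (1 - p^(n+1))

lemma tendsto_P (hp : ‖p‖ < 1) : Tendsto (P p) atTop (𝓝 (Pinf p)) := by
  have he : ∀ m : ℕ, (1 : ℂ) - p^(m+1) = 1 - p * p^m := fun m => by rw [pow_succ']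
  have h := tendsto_partial p p hp
  have hPe : Pinf p = ∏' n : ℕ, (1 - p * p^n) := tprod_congr he
  rw [hPe]
  apply h.congr
  intro m
  exact Finset.prod_congr rfl fun j _ => (he j).symm

lemma Pinf_ne (hp : ‖p‖ < 1) : Pinf p ≠ 0 := by
  have hc : Real.exp (-(‖p‖/((1-‖p‖)*(1-‖p‖)))) ≤ ‖Pinf p‖ :=
    ge_of_tendsto' (tendsto_norm.comp (tendsto_P hp)) (fun m => P_norm_ge hp m)
  exact norm_pos_iff.1 ((Real.exp_pos _).trans_le hc)

lemma tendsto_gb (hp : ‖p‖ < 1) (k : ℤ) :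
    Tendsto (fun n : ℕ => gb p (2*n) ((n:ℤ)+k)) atTop (𝓝 (Pinf p)⁻¹) := by
  have hP := tendsto_P hp
  have h2n : Tendsto (fun n : ℕ => P p (2*n)) atTop (𝓝 (Pinf p)) :=
    hP.comp (tendsto_atTop_atTop.2 fun b => ⟨b, fun a ha => by omega⟩)
  have ha : Tendsto (fun n : ℕ => P p (((n:ℤ)+k).toNat)) atTop (𝓝 (Pinf p)) :=
    hP.comp (tendsto_atTop_atTop.2 fun b => ⟨b + k.natAbs, fun a ha => by omega⟩)
  have hb : Tendsto (fun n : ℕ => P p (2*n - ((n:ℤ)+k).toNat)) atTop (𝓝 (Pinf p)) :=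
    hP.comp (tendsto_atTop_atTop.2 fun b => ⟨b + k.natAbs, fun a ha => by omega⟩)
  have hne : Pinf p * Pinf p ≠ 0 := mul_ne_zero (Pinf_ne hp) (Pinf_ne hp)
  have hdiv := h2n.div (ha.mul hb) hne
  have hval : Pinf p / (Pinf p * Pinf p) = (Pinf p)⁻¹ := by
    field_simp
  rw [hval] at hdiv
  apply hdiv.congr'
  filter_upwards [eventually_ge_atTop k.natAbs] with n hn
  rw [gb_val (by omega) (by push_cast; omega), Pi.div_apply]

end JTP

open JTP in
/-- the Jacobi triple product identity:
`θ_q(x) = ∑_{k∈ℤ} q^{k²} x^k = (q²;q²)_∞ (-qx;q²)_∞ (-q/x;q²)_∞`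
for `0 < |q| < 1` and `x ≠ 0`. -/
theorem jacobi_triple_product (q x : ℂ) (hq0 : 0 < ‖q‖) (hq1 : ‖q‖ < 1) (hx : x ≠ 0) :
    ∑' k : ℤ, q ^ (k ^ 2) * x ^ k =
      qPochInf (q ^ 2) (q ^ 2) * qPochInf (-q * x) (q ^ 2) * qPochInf (-q / x) (q ^ 2) := by
  have hqne : q ≠ 0 := norm_pos_iff.1 hq0
  have hp : ‖(q:ℂ)^2‖ < 1 := by
    rw [norm_pow]; exact pow_lt_one₀ (norm_nonneg q) hq1 two_ne_zero
  set p : ℂ := q^2 with hpdef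
  -- the sequence of finite sums
  set F : ℕ → ℤ → ℂ := fun n k => gb p (2*n) ((n:ℤ)+k) * (q^(k^2) * x^k) with hF
  -- dominated convergence
  have hbound : Summable (fun k : ℤ => Mgb p * ‖q ^ (k^2) * x ^ k‖) :=
    (sum_theta hq1 hx).mul_left _
  have htend : ∀ k : ℤ, Tendsto (F · k) atTop (𝓝 ((Pinf p)⁻¹ * (q^(k^2) * x^k))) :=
    fun k => (tendsto_gb hp k).mul_const _
  have hdom : ∀ n : ℕ, ∀ k : ℤ, ‖F n k‖ ≤ Mgb p * ‖q ^ (k^2) * x ^ k‖ := by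
    intro n k
    rw [hF]; simp only
    rw [norm_mul]
    exact mul_le_mul_of_nonneg_right (gb_norm_le hp _ _) (norm_nonneg _)
  have key : Tendsto (fun n => ∑' k : ℤ, F n k) atTop
      (𝓝 (∑' k : ℤ, (Pinf p)⁻¹ * (q^(k^2) * x^k))) :=
    tendsto_tsum_of_dominated_convergence hbound htend (Eventually.of_forall hdom)
  -- each tsum is a finite sum, equal to the partial product by finite_jtp
  have hts : ∀ n : ℕ, ∑' k : ℤ, F n k
      = ∏ j ∈ range n, ((1 + q^(2*j+1) * x) * (1 + q^(2*j+1) / x)) := by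
    intro n
    rw [← finite_jtp hqne hq1 hx n]
    apply tsum_eq_sum
    intro b hb
    rw [Finset.mem_Icc] at hb
    rw [hF]; simp only
    rcases lt_or_ge b (-(n:ℤ)) with h | h
    · rw [gb_zero_of_neg (by omega)]; ring
    · rw [gb_zero_of_gt (by push_cast; omega)]; ring
  -- limit of the products
  have hprod : Tendsto (fun n => ∏ j ∈ range n, ((1 + q^(2*j+1) * x) * (1 + q^(2*j+1) / x)))
      atTop (𝓝 (qPochInf (-q * x) (q^2) * qPochInf (-q / x) (q^2))) := by
    have e1 : ∀ j : ℕ, (1 : ℂ) - (-q*x) * (q^2)^j = 1 + q^(2*j+1) * x := by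
      intro j
      rw [← pow_mul]
      rw [show 2*j+1 = j*2+1 by ring, pow_succ']
      ring
    have e2 : ∀ j : ℕ, (1 : ℂ) - (-q/x) * (q^2)^j = 1 + q^(2*j+1) / x := by
      intro j
      rw [← pow_mul]
      rw [show 2*j+1 = j*2+1 by ring, pow_succ']
      ring
    have t1 : Tendsto (fun n => ∏ j ∈ range n, ((1:ℂ) + q^(2*j+1) * x)) atTop
        (𝓝 (qPochInf (-q * x) (q^2))) := by
      have := tendsto_partial (-q*x) (q^2) hp
      rw [show qPochInf (-q*x) (q^2) = ∏' n : ℕ, (1 - (-q*x) * (q^2)^n) from rfl]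
      exact this.congr fun n => Finset.prod_congr rfl fun j _ => e1 j
    have t2 : Tendsto (fun n => ∏ j ∈ range n, ((1:ℂ) + q^(2*j+1) / x)) atTop
        (𝓝 (qPochInf (-q / x) (q^2))) := by
      have := tendsto_partial (-q/x) (q^2) hp
      rw [show qPochInf (-q/x) (q^2) = ∏' n : ℕ, (1 - (-q/x) * (q^2)^n) from rfl]
      exact this.congr fun n => Finset.prod_congr rfl fun j _ => e2 j
    have := t1.mul t2
    apply this.congr
    intro n
    rw [← Finset.prod_mul_distrib]
  -- uniqueness of limits
  have huniq : ∑' k : ℤ, (Pinf p)⁻¹ * (q^(k^2) * x^k)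
      = qPochInf (-q * x) (q^2) * qPochInf (-q / x) (q^2) := by
    apply tendsto_nhds_unique _ hprod
    exact key.congr fun n => hts n
  rw [tsum_mul_left] at huniq
  have hPq : qPochInf (q^2) (q^2) = Pinf p := by
    rw [qPochInf, Pinf]
    exact tprod_congr fun n => by ring
  have hS : ∑' k : ℤ, q^(k^2) * x^k
      = Pinf p * (qPochInf (-q * x) (q^2) * qPochInf (-q / x) (q^2)) := by
    rw [← huniq]
    field_simp [Pinf_ne hp]
  rw [hS, hPq]
  ring
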